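/- Let 1 ≤ Z₁ < Z₂ with β·Z₂ ≤ 1. Then sup_{z ≥ 1} (μ_{[Z₁,Z₂]}(z) − z^{−α}) = (1−p)(1−β^α) + p·(Z₁^{−α} − Z₂^{−α}), which is strictly larger than sup_{z ≥ 1} (μ̂₂(z) − z^{−α}) = (1−p)(1−β^α); that is, debiasing an interval of potentials lying entirely below 1/β strictly increases the maximum mistreatment of G₂ students. -/

import Mathlib

open Set

/-- Tail function `F̄(t) = min(1, t^{-α})`. -/
noncomputable def Fbar (α t : ℝ) : ℝ := min 1 (t ^ (-α))

/-- Biased school assignment of a G₂ student of true potential `z`. -/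
noncomputable def muHat2 (α β p z : ℝ) : ℝ :=
  (1 - p) * Fbar α (β * z) + p * z ^ (-α)

/-- School attended by a G₂ student of true potential `z` after the G₂ students
with true potentials in `[Z₁, Z₂]` have been debiased. -/
noncomputable def muT (α β p Z₁ Z₂ z : ℝ) : ℝ :=
  if z < Z₁ then (1 - p) * Fbar α (β * z) + p * z ^ (-α)
  else if z ≤ Z₂ then
    (1 - p) * z ^ (-α) + p * (z ^ (-α) - Z₂ ^ (-α)) + p * (max (z / β) Z₂) ^ (-α)
  else
    (1 - p) * Fbar α (β * z) + p * z ^ (-α)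
      + p * max 0 ((max (β * z) Z₁) ^ (-α) - Z₂ ^ (-α))

lemma inv_rpow_neg' {α β : ℝ} (hβ : 0 < β) : (β⁻¹ : ℝ) ^ (-α) = β ^ α := by
  rw [Real.rpow_neg (by positivity), Real.inv_rpow hβ.le, inv_inv]

lemma coreA {α β : ℝ} (hα : 0 < α) (hβ0 : 0 < β) (hβ1 : β < 1) {z : ℝ} (hz : 1 ≤ z) :
    min 1 ((β * z) ^ (-α)) - z ^ (-α) ≤ 1 - β ^ α := by
  have hz0 : 0 < z := lt_of_lt_of_le one_pos hz
  rcases le_or_gt z β⁻¹ with h | h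
  · have h1 : β ^ α ≤ z ^ (-α) := by
      rw [← inv_rpow_neg' hβ0]
      exact Real.rpow_le_rpow_of_nonpos hz0 h (by linarith)
    have h2 := min_le_left (1:ℝ) ((β*z)^(-α))
    linarith
  · have h2 : z ^ (-α) ≤ β ^ α := by
      rw [← inv_rpow_neg' hβ0]
      exact Real.rpow_le_rpow_of_nonpos (by positivity) h.le (by linarith)
    have h3 : (β * z) ^ (-α) = β ^ (-α) * z ^ (-α) := Real.mul_rpow hβ0.le hz0.le
    have hA : 0 < β ^ α := Real.rpow_pos_of_pos hβ0 α
    have hB : β ^ (-α) * β ^ α = 1 := by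
      rw [← Real.rpow_add hβ0]; simp
    have hA1 : β ^ α ≤ 1 := Real.rpow_le_one hβ0.le hβ1.le hα.le
    have hBnn : 0 ≤ β ^ (-α) := Real.rpow_nonneg hβ0.le _
    have hB1 : 1 ≤ β ^ (-α) := by nlinarith
    have hmin : min 1 ((β*z)^(-α)) ≤ β ^ (-α) * z ^ (-α) :=
      (min_le_right (1:ℝ) ((β*z)^(-α))).trans (le_of_eq h3)
    have hkey : 0 ≤ (β ^ (-α) - 1) * (β ^ α - z ^ (-α)) :=
      mul_nonneg (by linarith) (by linarith)
    nlinarith [hkey]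

/-- Debiasing an interval of potentials lying entirely below `1/β` strictly
increases the maximum mistreatment of G₂ students. -/
theorem debias_below_one_over_beta_worsens (α β p Z₁ Z₂ : ℝ) (hα : 0 < α)
    (hβ : β ∈ Ioo (0:ℝ) 1) (hp : p ∈ Ioo (0:ℝ) 1)
    (hZ₁ : 1 ≤ Z₁) (hZ : Z₁ < Z₂) (hlow : β * Z₂ ≤ 1) :
    sSup ((fun z => muT α β p Z₁ Z₂ z - z ^ (-α)) '' Ici (1:ℝ))
      = (1 - p) * (1 - β ^ α) + p * (Z₁ ^ (-α) - Z₂ ^ (-α)) ∧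
    sSup ((fun z => muHat2 α β p z - z ^ (-α)) '' Ici (1:ℝ))
      = (1 - p) * (1 - β ^ α) ∧
    sSup ((fun z => muHat2 α β p z - z ^ (-α)) '' Ici (1:ℝ))
      < sSup ((fun z => muT α β p Z₁ Z₂ z - z ^ (-α)) '' Ici (1:ℝ)) := by
  obtain ⟨hβ0, hβ1⟩ := hβ
  obtain ⟨hp0, hp1⟩ := hp
  have hZ₁0 : (0:ℝ) < Z₁ := by linarith
  have hZ₂0 : (0:ℝ) < Z₂ := by linarith
  have hβinv1 : (1:ℝ) ≤ β⁻¹ := by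
    rw [le_inv_comm₀ one_pos hβ0]; simpa using hβ1.le
  have hbb : β * β⁻¹ = 1 := mul_inv_cancel₀ hβ0.ne'
  have hA1 : β ^ α ≤ 1 := Real.rpow_le_one hβ0.le hβ1.le hα.le
  have hT : Z₂ ^ (-α) < Z₁ ^ (-α) :=
    Real.rpow_lt_rpow_of_neg hZ₁0 hZ (by linarith)
  have hS2nn : (0:ℝ) ≤ (1 - p) * (1 - β ^ α) :=
    mul_nonneg (by linarith) (by linarith)
  -- second sup
  have h2 : sSup ((fun z => muHat2 α β p z - z ^ (-α)) '' Ici (1:ℝ))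
      = (1 - p) * (1 - β ^ α) := by
    apply IsGreatest.csSup_eq
    constructor
    · refine ⟨β⁻¹, hβinv1, ?_⟩
      simp only [muHat2, Fbar, hbb, Real.one_rpow, min_self, inv_rpow_neg' hβ0]
      ring
    · rintro x ⟨z, hz, rfl⟩
      simp only [muHat2, Fbar]
      have hc := coreA hα hβ0 hβ1 (mem_Ici.mp hz)
      nlinarith [mul_le_mul_of_nonneg_left hc (by linarith : (0:ℝ) ≤ 1 - p)]
  -- first sup: upper bound
  have hub1 : ∀ x ∈ (fun z => muT α β p Z₁ Z₂ z - z ^ (-α)) '' Ici (1:ℝ),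
      x ≤ (1 - p) * (1 - β ^ α) + p * (Z₁ ^ (-α) - Z₂ ^ (-α)) := by
    rintro x ⟨z, hz, rfl⟩
    have hz1 : (1:ℝ) ≤ z := mem_Ici.mp hz
    have hz0 : (0:ℝ) < z := by linarith
    have hq : (0:ℝ) ≤ p * (Z₁ ^ (-α) - Z₂ ^ (-α)) := by nlinarith
    simp only [muT, Fbar]
    split_ifs with h1 hh2
    · have hc := coreA hα hβ0 hβ1 hz1
      nlinarith [mul_le_mul_of_nonneg_left hc (by linarith : (0:ℝ) ≤ 1 - p)]
    · have hMα : (max (z / β) Z₂) ^ (-α) ≤ Z₂ ^ (-α) :=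
        Real.rpow_le_rpow_of_nonpos hZ₂0 (le_max_right _ _) (by linarith)
      nlinarith [mul_nonneg hp0.le (sub_nonneg.mpr hMα)]
    · have hc := coreA hα hβ0 hβ1 hz1
      have hNα : (max (β * z) Z₁) ^ (-α) ≤ Z₁ ^ (-α) :=
        Real.rpow_le_rpow_of_nonpos hZ₁0 (le_max_right _ _) (by linarith)
      have hmax : max 0 ((max (β * z) Z₁) ^ (-α) - Z₂ ^ (-α)) ≤ Z₁ ^ (-α) - Z₂ ^ (-α) :=
        max_le (by linarith) (by linarith)
      nlinarith [mul_le_mul_of_nonneg_left hc (by linarith : (0:ℝ) ≤ 1 - p),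
        mul_le_mul_of_nonneg_left hmax hp0.le]
  have h1 : sSup ((fun z => muT α β p Z₁ Z₂ z - z ^ (-α)) '' Ici (1:ℝ))
      = (1 - p) * (1 - β ^ α) + p * (Z₁ ^ (-α) - Z₂ ^ (-α)) := by
    apply csSup_eq_of_forall_le_of_forall_lt_exists_gt
    · exact ⟨_, ⟨1, self_mem_Ici, rfl⟩⟩
    · exact hub1
    · intro w hw
      rcases lt_or_eq_of_le hlow with hlt | heq
      · -- supremum attained at z = β⁻¹
        have hZ₂β : Z₂ < β⁻¹ := by
          have h := hlt
          rw [← hbb] at h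
          exact lt_of_mul_lt_mul_left h hβ0.le
        refine ⟨_, ⟨β⁻¹, mem_Ici.mpr hβinv1, rfl⟩, ?_⟩
        have hval : muT α β p Z₁ Z₂ β⁻¹ - (β⁻¹) ^ (-α)
            = (1 - p) * (1 - β ^ α) + p * (Z₁ ^ (-α) - Z₂ ^ (-α)) := by
          rw [muT, if_neg (by push_neg; linarith), if_neg (by push_neg; linarith)]
          rw [hbb]
          simp only [Fbar, Real.one_rpow, min_self, inv_rpow_neg' hβ0,
            max_eq_right hZ₁, max_eq_right (sub_nonneg.mpr hT.le)]
          ring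
        show w < muT α β p Z₁ Z₂ β⁻¹ - (β⁻¹) ^ (-α)
        rw [hval]; exact hw
      · -- β * Z₂ = 1 : approach the supremum from the right of Z₂
        have hZ₂β : Z₂ = β⁻¹ := by
          field_simp
          linarith [heq]
        set f : ℝ → ℝ := fun z => (1 - p) * min 1 ((β * z) ^ (-α)) + p * z ^ (-α)
          + p * max 0 ((max (β * z) Z₁) ^ (-α) - Z₂ ^ (-α)) - z ^ (-α) with hf
        have hc1 : ContinuousAt (fun z : ℝ => z ^ (-α)) Z₂ :=
          Real.continuousAt_rpow_const _ _ (Or.inl hZ₂0.ne')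
        have hc2 : ContinuousAt (fun z : ℝ => (β * z) ^ (-α)) Z₂ :=
          ((continuous_const.mul continuous_id).continuousAt).rpow_const
            (Or.inl (by show β * Z₂ ≠ 0; rw [heq]; norm_num))
        have hc3 : ContinuousAt (fun z : ℝ => (max (β * z) Z₁) ^ (-α)) Z₂ := by
          have hpt : max (β * Z₂) Z₁ ≠ 0 := by
            rw [heq]
            have : max (1:ℝ) Z₁ = Z₁ := max_eq_right hZ₁
            rw [this]; exact hZ₁0.ne'
          exact (((continuous_const.mul continuous_id).max continuous_const).continuousAt).rpow_const
            (Or.inl (by simpa using hpt))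
        have hfc : ContinuousAt f Z₂ := by
          apply ContinuousAt.sub _ hc1
          apply ContinuousAt.add
          apply ContinuousAt.add
          · exact continuousAt_const.mul (continuousAt_const.min hc2)
          · exact continuousAt_const.mul hc1
          · exact continuousAt_const.mul (continuousAt_const.max (hc3.sub continuousAt_const))
        have hfZ₂ : f Z₂ = (1 - p) * (1 - β ^ α) + p * (Z₁ ^ (-α) - Z₂ ^ (-α)) := by
          simp only [hf, heq, Real.one_rpow, min_self, max_eq_right hZ₁,
            max_eq_right (sub_nonneg.mpr hT.le)]
          have : Z₂ ^ (-α) = β ^ α := by rw [hZ₂β, inv_rpow_neg' hβ0]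
          rw [this]; ring
        have htend : Filter.Tendsto f (nhdsWithin Z₂ (Ioi Z₂))
            (nhds ((1 - p) * (1 - β ^ α) + p * (Z₁ ^ (-α) - Z₂ ^ (-α)))) := by
          rw [← hfZ₂]
          exact hfc.continuousWithinAt
        have hev : ∀ᶠ z in nhdsWithin Z₂ (Ioi Z₂), w < f z :=
          htend.eventually (lt_mem_nhds hw)
        obtain ⟨z, hwz, hzZ₂⟩ := (hev.and self_mem_nhdsWithin).exists
        have hzZ₂' : Z₂ < z := hzZ₂
        refine ⟨_, ⟨z, mem_Ici.mpr (by linarith), rfl⟩, ?_⟩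
        have : muT α β p Z₁ Z₂ z - z ^ (-α) = f z := by
          rw [muT, if_neg (by push_neg; linarith), if_neg (by push_neg; linarith)]
          simp only [Fbar, hf]
        show w < muT α β p Z₁ Z₂ z - z ^ (-α)
        rw [this]; exact hwz
  refine ⟨h1, h2, ?_⟩
  rw [h1, h2]
  nlinarith [mul_pos hp0 (sub_pos.mpr hT)]
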